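/- Let m1, m2, n1 ≥ 0 with m2 > 0. The number of elements of the union of the sets Z¹ = {(c,d) ∈ Z_+^2 : 2c+3d ≤ m1+n1, min(m1+m2−1, n1) < c+d ≤ min(m1+m2, n1)}, Z² = {(b,c) ∈ Z_+^2 : 2c+b < m1+n1, b < m2−1, min(m1+m2−1,n1) ≤ b+c < min(m1+m2,n1)}, and Z³ = {c ∈ Z_+ : c ≤ min(m1, n1−m2)} (these three being counted disjointly) equals: 0 if n1 < m2; n1−m2+1 if m2 ≤ n1 < 2m1+3m2; and 2(m1+m2)+1 if n1 ≥ 2m1+3m2. -/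
import Mathlib


/-- Increment count k in the inductive step of the G2 cardinality comparison. -/
theorem stmt_18 (m1 m2 n1 : ℤ) (hm1 : 0 ≤ m1) (hm2 : 0 < m2) (hn1 : 0 ≤ n1) :
    ((Set.ncard {p : ℤ × ℤ | 0 ≤ p.1 ∧ 0 ≤ p.2 ∧ 2 * p.1 + 3 * p.2 ≤ m1 + n1 ∧
          min (m1 + m2 - 1) n1 < p.1 + p.2 ∧ p.1 + p.2 ≤ min (m1 + m2) n1}) +
      (Set.ncard {p : ℤ × ℤ | 0 ≤ p.1 ∧ 0 ≤ p.2 ∧ 2 * p.2 + p.1 < m1 + n1 ∧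
          p.1 < m2 - 1 ∧ min (m1 + m2 - 1) n1 ≤ p.1 + p.2 ∧
          p.1 + p.2 < min (m1 + m2) n1}) +
      (Set.ncard {c : ℤ | 0 ≤ c ∧ c ≤ min m1 (n1 - m2)}) : ℤ) =
      if n1 < m2 then 0
      else if n1 < 2 * m1 + 3 * m2 then n1 - m2 + 1
      else 2 * (m1 + m2) + 1 := by
  have h3 : {c : ℤ | 0 ≤ c ∧ c ≤ min m1 (n1 - m2)}
      = ↑(Finset.Icc (0 : ℤ) (min m1 (n1 - m2))) := by
    ext c; simp [Finset.mem_Icc]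
  rw [h3, Set.ncard_coe_finset, Int.card_Icc]
  by_cases h : n1 < m1 + m2
  · have h1 : {p : ℤ × ℤ | 0 ≤ p.1 ∧ 0 ≤ p.2 ∧ 2 * p.1 + 3 * p.2 ≤ m1 + n1 ∧
          min (m1 + m2 - 1) n1 < p.1 + p.2 ∧ p.1 + p.2 ≤ min (m1 + m2) n1} = ∅ := by
      ext ⟨c, d⟩
      simp only [Set.mem_setOf_eq, Set.mem_empty_iff_false, iff_false, not_and]
      omega
    have h2 : {p : ℤ × ℤ | 0 ≤ p.1 ∧ 0 ≤ p.2 ∧ 2 * p.2 + p.1 < m1 + n1 ∧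
          p.1 < m2 - 1 ∧ min (m1 + m2 - 1) n1 ≤ p.1 + p.2 ∧
          p.1 + p.2 < min (m1 + m2) n1} = ∅ := by
      ext ⟨c, d⟩
      simp only [Set.mem_setOf_eq, Set.mem_empty_iff_false, iff_false, not_and]
      omega
    rw [h1, h2]; simp only [Set.ncard_empty]
    split_ifs <;> push_cast <;> omega
  · have h1 : {p : ℤ × ℤ | 0 ≤ p.1 ∧ 0 ≤ p.2 ∧ 2 * p.1 + 3 * p.2 ≤ m1 + n1 ∧
          min (m1 + m2 - 1) n1 < p.1 + p.2 ∧ p.1 + p.2 ≤ min (m1 + m2) n1}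
        = ↑((Finset.Icc (0 : ℤ) (min (m1 + m2) (n1 - m1 - 2 * m2))).image
            (fun d => (m1 + m2 - d, d))) := by
      ext ⟨c, d⟩
      simp only [Set.mem_setOf_eq, Finset.coe_image, Set.mem_image, Finset.mem_coe,
        Finset.mem_Icc, Prod.mk.injEq]
      constructor
      · rintro ⟨hc, hd, ha, hb, hcd⟩
        exact ⟨d, ⟨hd, by omega⟩, by omega, rfl⟩
      · rintro ⟨a, ⟨ha0, ha1⟩, hc, hd⟩
        subst hd
        refine ⟨by omega, by omega, by omega, by omega, by omega⟩
    have h2 : {p : ℤ × ℤ | 0 ≤ p.1 ∧ 0 ≤ p.2 ∧ 2 * p.2 + p.1 < m1 + n1 ∧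
          p.1 < m2 - 1 ∧ min (m1 + m2 - 1) n1 ≤ p.1 + p.2 ∧
          p.1 + p.2 < min (m1 + m2) n1}
        = ↑((Finset.Icc (max 0 (m1 + 2 * m2 - 1 - n1)) (m2 - 2)).image
            (fun b => (b, m1 + m2 - 1 - b))) := by
      ext ⟨b, c⟩
      simp only [Set.mem_setOf_eq, Finset.coe_image, Set.mem_image, Finset.mem_coe,
        Finset.mem_Icc, Prod.mk.injEq]
      constructor
      · rintro ⟨hb, hc, ha, hbb, hlo, hhi⟩
        exact ⟨b, ⟨by omega, by omega⟩, rfl, by omega⟩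
      · rintro ⟨a, ⟨ha0, ha1⟩, hb, hc⟩
        subst hb; subst hc
        refine ⟨by omega, by omega, by omega, by omega, by omega, by omega⟩
    have inj1 : Function.Injective (fun d : ℤ => (m1 + m2 - d, d)) := by
      intro a b hab
      simpa using congrArg Prod.snd hab
    have inj2 : Function.Injective (fun b : ℤ => (b, m1 + m2 - 1 - b)) := by
      intro a b hab
      simpa using congrArg Prod.fst hab
    rw [h1, h2, Set.ncard_coe_finset, Set.ncard_coe_finset,
      Finset.card_image_of_injective _ inj1, Finset.card_image_of_injective _ inj2,
      Int.card_Icc, Int.card_Icc]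
    split_ifs <;> push_cast <;> omega
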